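/- For every integer n ≥ 1, the auxiliary quantities satisfy the summed identity Σ_{j=0}^{n−1} R_j(t) = 2β_n (R_{n−1}(t) + R_n(t)) − t r_n(t). -/

import Mathlib

open MeasureTheory Polynomial Real Filter Set

/-! ### Coefficient and degree helpers -/

lemma coeff_X_mul' (p : Polynomial ℝ) (k : ℕ) :
    (Polynomial.X * p).coeff k = if k = 0 then 0 else p.coeff (k - 1) := by
  cases k with
  | zero => simp [Polynomial.mul_coeff_zero]
  | succ k => simp [Polynomial.coeff_X_mul]

lemma coeff_lin (t : ℝ) (p : Polynomial ℝ) (k : ℕ) :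
    ((Polynomial.C t - 2 * Polynomial.X) * p).coeff k
      = t * p.coeff k - 2 * (Polynomial.X * p).coeff k := by
  rw [sub_mul, Polynomial.coeff_sub, Polynomial.coeff_C_mul]
  congr 1
  rw [show (2 : Polynomial ℝ) * Polynomial.X * p = Polynomial.C 2 * (Polynomial.X * p) by
    rw [show (2 : Polynomial ℝ) = Polynomial.C 2 from (map_ofNat Polynomial.C 2).symm]; ring]
  rw [Polynomial.coeff_C_mul]

lemma degree_le_of_coeffs (p : Polynomial ℝ) (k : ℕ) (hc : ∀ j : ℕ, k < j → p.coeff j = 0) :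
    p.degree ≤ (k : ℕ) := by
  rw [Polynomial.degree_le_iff_coeff_zero]
  intro m hm
  exact hc m (by exact_mod_cast hm)

/-! ### Integrability toolkit -/

lemma poly_growth (q : Polynomial ℝ) :
    ∃ C : ℝ, 0 ≤ C ∧ ∀ y : ℝ, |q.eval y| ≤ C * Real.exp (y ^ 2 / 4) := by
  induction q using Polynomial.induction_on' with
  | add p r hp hr =>
      obtain ⟨C1, hC1, h1⟩ := hp
      obtain ⟨C2, hC2, h2⟩ := hr
      refine ⟨C1 + C2, by linarith, fun y => ?_⟩
      calc |(p + r).eval y| ≤ |p.eval y| + |r.eval y| := by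
              simp [Polynomial.eval_add]; exact abs_add_le _ _
        _ ≤ C1 * Real.exp (y ^ 2 / 4) + C2 * Real.exp (y ^ 2 / 4) := by
              exact add_le_add (h1 y) (h2 y)
        _ = (C1 + C2) * Real.exp (y ^ 2 / 4) := by ring
  | monomial n a =>
      refine ⟨|a| * Real.exp ((n : ℝ) ^ 2), by positivity, fun y => ?_⟩
      have h1 : |y| ^ n ≤ Real.exp ((n : ℝ) * |y|) := by
        calc |y| ^ n ≤ (1 + |y|) ^ n := by
              apply pow_le_pow_left₀ (abs_nonneg y); linarith
          _ ≤ (Real.exp |y|) ^ n := by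
              apply pow_le_pow_left₀ (by positivity)
              linarith [Real.add_one_le_exp |y|]
          _ = Real.exp ((n : ℝ) * |y|) := by
              rw [← Real.exp_nat_mul]
      have h2 : (n : ℝ) * |y| ≤ (n : ℝ) ^ 2 + y ^ 2 / 4 := by
        nlinarith [sq_nonneg ((n : ℝ) - |y| / 2), sq_abs y]
      calc |(Polynomial.monomial n a).eval y| = |a| * |y| ^ n := by
            simp [Polynomial.eval_monomial, abs_mul, abs_pow]
        _ ≤ |a| * Real.exp ((n : ℝ) ^ 2 + y ^ 2 / 4) := by
            apply mul_le_mul_of_nonneg_left _ (abs_nonneg a)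
            exact h1.trans (Real.exp_le_exp.2 h2)
        _ = |a| * Real.exp ((n : ℝ) ^ 2) * Real.exp (y ^ 2 / 4) := by
            rw [Real.exp_add]; ring

lemma integrable_abs_rpow_gauss {b s : ℝ} (hb : 0 < b) (hs : -1 < s) :
    Integrable fun x : ℝ => |x| ^ s * Real.exp (-b * x ^ 2) := by
  have hIoi : IntegrableOn (fun x : ℝ => |x| ^ s * Real.exp (-b * x ^ 2)) (Ioi 0) := by
    apply (integrableOn_rpow_mul_exp_neg_mul_sq hb hs).congr_fun _ measurableSet_Ioi
    intro x hx
    show x ^ s * _ = |x| ^ s * _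
    rw [abs_of_pos hx]
  rw [← integrableOn_univ, ← Set.Iio_union_Ici (a := (0 : ℝ)), integrableOn_union]
  constructor
  · rw [← (Measure.measurePreserving_neg (volume : Measure ℝ)).integrableOn_comp_preimage
        (Homeomorph.neg ℝ).measurableEmbedding]
    simp only [Function.comp_def, neg_preimage, neg_Iio, abs_neg, neg_sq, neg_zero]
    exact hIoi
  · rw [integrableOn_Ici_iff_integrableOn_Ioi]
    exact hIoi

lemma integrable_rpow_gauss_lin (t c : ℝ) {b s : ℝ} (hb : 0 < b) (hs : -1 < s) :
    Integrable fun y : ℝ => |y - t| ^ s * Real.exp (-b * y ^ 2 + c * y) := by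
  set K : ℝ := b / 2 * t ^ 2 + (c - b * t) ^ 2 / (2 * b) with hK
  have hbase : Integrable fun y : ℝ =>
      Real.exp K * (|y - t| ^ s * Real.exp (-(b / 2) * (y - t) ^ 2)) := by
    apply Integrable.const_mul
    exact (integrable_abs_rpow_gauss (by linarith) hs).comp_sub_right t
  apply hbase.mono'
  · apply Measurable.aestronglyMeasurable
    exact (((measurable_id.sub_const t).abs.pow_const s).mul
      (((measurable_id.pow_const 2).const_mul (-b)).add (measurable_id.const_mul c)).exp)
  · filter_upwards with y
    rw [Real.norm_eq_abs, abs_mul, abs_of_nonneg (Real.exp_pos _).le,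
      abs_of_nonneg (Real.rpow_nonneg (abs_nonneg _) s)]
    rw [mul_comm (Real.exp K), mul_assoc, ← Real.exp_add]
    apply mul_le_mul_of_nonneg_left _ (Real.rpow_nonneg (abs_nonneg _) s)
    apply Real.exp_le_exp.2
    have key : (c - b * t) ^ 2 / (2 * b) * (2 * b) = (c - b * t) ^ 2 :=
      div_mul_cancel₀ _ (by linarith)
    nlinarith [sq_nonneg (b * y - (c - b * t)), hb, key]

lemma integrable_poly_rpow_gauss (t : ℝ) (q : Polynomial ℝ) {s : ℝ} (hs : -1 < s) :
    Integrable fun y : ℝ => |q.eval y| * (|y - t| ^ s * Real.exp (-y ^ 2 + t * y)) := by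
  obtain ⟨C, hC, hCb⟩ := poly_growth q
  have hbase : Integrable fun y : ℝ =>
      C * (|y - t| ^ s * Real.exp (-(3/4) * y ^ 2 + t * y)) :=
    (integrable_rpow_gauss_lin t t (by norm_num) hs).const_mul C
  apply hbase.mono'
  · apply Measurable.aestronglyMeasurable
    exact (q.continuous.measurable).abs.mul
      (((measurable_id.sub_const t).abs.pow_const s).mul
        (((measurable_id.pow_const 2).neg).add (measurable_id.const_mul t)).exp)
  · filter_upwards with y
    have h1 : (0:ℝ) ≤ |y - t| ^ s := Real.rpow_nonneg (abs_nonneg _) s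
    rw [Real.norm_eq_abs, abs_mul, abs_abs, abs_mul, abs_of_nonneg h1,
      abs_of_nonneg (Real.exp_pos _).le]
    have h2 := hCb y
    have h3 : Real.exp (y ^ 2 / 4) * Real.exp (-y ^ 2 + t * y)
        = Real.exp (-(3/4) * y ^ 2 + t * y) := by
      rw [← Real.exp_add]; ring_nf
    calc |q.eval y| * (|y - t| ^ s * Real.exp (-y ^ 2 + t * y))
        ≤ C * Real.exp (y ^ 2 / 4) * (|y - t| ^ s * Real.exp (-y ^ 2 + t * y)) := by
          apply mul_le_mul_of_nonneg_right h2 (by positivity)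
      _ = C * (|y - t| ^ s * (Real.exp (y ^ 2 / 4) * Real.exp (-y ^ 2 + t * y))) := by ring
      _ = C * (|y - t| ^ s * Real.exp (-(3/4) * y ^ 2 + t * y)) := by rw [h3]

/-! ### Properties of the weight -/

section W

variable {t γ A B : ℝ} {w : ℝ → ℝ}
variable (hγ : 0 < γ) (hA : 0 ≤ A) (hAB : 0 ≤ A + B)
variable (hw : ∀ y : ℝ, w y =
      Real.exp (-y ^ 2 + t * y) * |y - t| ^ γ *
        (A + B * (if 0 < y - t then (1 : ℝ) else 0)))

set_option linter.unusedSectionVars false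

include hw hA hAB in
lemma w_nonneg : ∀ y, 0 ≤ w y := by
  intro y
  rw [hw y]
  rcases le_or_gt (y - t) 0 with hc | hc
  · rw [if_neg (not_lt.2 hc)]
    have : (0:ℝ) ≤ A + B * 0 := by linarith
    positivity
  · rw [if_pos hc]
    have : (0:ℝ) ≤ A + B * 1 := by linarith
    positivity

include hw hA hAB in
lemma w_le : ∀ y, w y ≤ (A + |B|) * (|y - t| ^ γ * Real.exp (-y ^ 2 + t * y)) := by
  intro y
  rw [hw y]
  have hfac : A + B * (if 0 < y - t then (1:ℝ) else 0) ≤ A + |B| := by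
    split
    · have := le_abs_self B; linarith
    · have := abs_nonneg B; linarith
  have h1 : (0:ℝ) ≤ Real.exp (-y ^ 2 + t * y) * |y - t| ^ γ := by positivity
  calc Real.exp (-y ^ 2 + t * y) * |y - t| ^ γ * (A + B * (if 0 < y - t then (1:ℝ) else 0))
      ≤ Real.exp (-y ^ 2 + t * y) * |y - t| ^ γ * (A + |B|) := by
        exact mul_le_mul_of_nonneg_left hfac h1
    _ = (A + |B|) * (|y - t| ^ γ * Real.exp (-y ^ 2 + t * y)) := by ring

include hw in
lemma w_meas : Measurable w := by
  have : w = fun y => Real.exp (-y ^ 2 + t * y) * |y - t| ^ γ *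
      (A + B * (if 0 < y - t then (1 : ℝ) else 0)) := funext hw
  rw [this]
  apply Measurable.mul
  · exact ((((measurable_id.pow_const 2).neg).add (measurable_id.const_mul t)).exp).mul
      ((measurable_id.sub_const t).abs.pow_const γ)
  · apply Measurable.add measurable_const
    apply Measurable.const_mul
    exact Measurable.ite (measurableSet_lt measurable_const (measurable_id.sub_const t))
      measurable_const measurable_const

include hγ hA hAB hw in
lemma int_qw (q : Polynomial ℝ) : Integrable fun y => q.eval y * w y := by
  have hbase := (integrable_poly_rpow_gauss t q (by linarith : (-1:ℝ) < γ)).const_mul (A + |B|)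
  apply hbase.mono'
  · exact (q.continuous.measurable.mul (w_meas hw)).aestronglyMeasurable
  · filter_upwards with y
    rw [Real.norm_eq_abs, abs_mul, abs_of_nonneg (w_nonneg hA hAB hw y)]
    calc |q.eval y| * w y
        ≤ |q.eval y| * ((A + |B|) * (|y - t| ^ γ * Real.exp (-y ^ 2 + t * y))) :=
          mul_le_mul_of_nonneg_left (w_le hA hAB hw y) (abs_nonneg _)
      _ = (A + |B|) * (|q.eval y| * (|y - t| ^ γ * Real.exp (-y ^ 2 + t * y))) := by ring

include hγ hA hAB hw in
lemma int_qw_div (q : Polynomial ℝ) : Integrable fun y => q.eval y * w y / (y - t) := by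
  have hbase := (integrable_poly_rpow_gauss t q (by linarith : (-1:ℝ) < γ - 1)).const_mul (A + |B|)
  apply hbase.mono'
  · apply AEStronglyMeasurable.mul
    · exact (q.continuous.measurable.mul (w_meas hw)).aestronglyMeasurable
    · exact ((measurable_id.sub_const t).inv).aestronglyMeasurable
  · filter_upwards with y
    rcases eq_or_ne y t with rfl | hy
    · have : w y = 0 := by
        rw [hw y]; simp [Real.zero_rpow hγ.ne']
      rw [this]
      simp only [mul_zero, zero_div, norm_zero]
      positivity
    · have hyt : y - t ≠ 0 := sub_ne_zero.2 hy
      rw [Real.norm_eq_abs, abs_div, abs_mul, abs_of_nonneg (w_nonneg hA hAB hw y)]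
      have key : |y - t| ^ γ / |y - t| = |y - t| ^ (γ - 1) := by
        rw [Real.rpow_sub_one (abs_ne_zero.2 hyt)]
      calc |q.eval y| * w y / |y - t|
          ≤ |q.eval y| * ((A + |B|) * (|y - t| ^ γ * Real.exp (-y ^ 2 + t * y))) / |y - t| := by
            gcongr
            exact w_le hA hAB hw y
        _ = (A + |B|) * (|q.eval y| * ((|y - t| ^ γ / |y - t|) * Real.exp (-y ^ 2 + t * y))) := by
            ring
        _ = (A + |B|) * (|q.eval y| * (|y - t| ^ (γ - 1) * Real.exp (-y ^ 2 + t * y))) := by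
            rw [key]

include hγ hw in
lemma w_hasDerivAt {y : ℝ} (hyt : y ≠ t) :
    HasDerivAt w ((-(2 * y) + t + γ / (y - t)) * w y) y := by
  have hexp : HasDerivAt (fun x : ℝ => Real.exp (-x ^ 2 + t * x))
      ((-(2 * y) + t) * Real.exp (-y ^ 2 + t * y)) y := by
    have h0 : HasDerivAt (fun x : ℝ => -x ^ 2 + t * x) (-(2 * y) + t) y := by
      refine (HasDerivAt.add ((hasDerivAt_pow 2 y).neg) ((hasDerivAt_id y).const_mul t)).congr_deriv ?_
      norm_num
    simpa [mul_comm] using h0.exp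
  rcases hyt.lt_or_gt with hlt | hlt
  · -- y < t
    have hmem : Iio t ∈ nhds y := isOpen_Iio.mem_nhds hlt
    have hgt : ∀ x ∈ Iio t, w x = Real.exp (-x ^ 2 + t * x) * (t - x) ^ γ * A := by
      intro x hx
      have h1 : x - t < 0 := sub_neg.2 hx
      rw [hw x, abs_of_neg h1, if_neg (not_lt.2 h1.le), neg_sub]
      norm_num
    have hev : w =ᶠ[nhds y] fun x => Real.exp (-x ^ 2 + t * x) * (t - x) ^ γ * A :=
      eventually_of_mem hmem hgt
    have hrpow : HasDerivAt (fun x : ℝ => (t - x) ^ γ) (γ * (t - y) ^ (γ - 1) * (-1)) y := by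
      have h1 := Real.hasDerivAt_rpow_const (x := t - y) (p := γ)
        (Or.inl (sub_ne_zero.2 hyt.symm))
      have h2 : HasDerivAt (fun x : ℝ => t - x) (-1) y := by
        simpa using (hasDerivAt_id y).const_sub t
      exact h1.comp y h2
    have hf := (hexp.mul hrpow).mul_const A
    apply HasDerivAt.congr_of_eventuallyEq _ hev
    convert hf using 1
    · rfl
    · rfl
    have hw' : w y = Real.exp (-y ^ 2 + t * y) * (t - y) ^ γ * A := hgt y hlt
    have hne : t - y ≠ 0 := sub_ne_zero.2 hyt.symm
    have hne' : y - t ≠ 0 := sub_ne_zero.2 hyt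
    rw [hw', Real.rpow_sub_one hne]
    field_simp
    ring
  · -- t < y
    have hmem : Ioi t ∈ nhds y := isOpen_Ioi.mem_nhds hlt
    have hgt : ∀ x ∈ Ioi t, w x =
        Real.exp (-x ^ 2 + t * x) * (x - t) ^ γ * (A + B) := by
      intro x hx
      have h1 : 0 < x - t := sub_pos.2 hx
      rw [hw x, abs_of_pos h1, if_pos h1]
      ring_nf
    have hev : w =ᶠ[nhds y] fun x => Real.exp (-x ^ 2 + t * x) * (x - t) ^ γ * (A + B) :=
      eventually_of_mem hmem hgt
    have hrpow : HasDerivAt (fun x : ℝ => (x - t) ^ γ) (γ * (y - t) ^ (γ - 1)) y := by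
      have h1 := Real.hasDerivAt_rpow_const (x := y - t) (p := γ)
        (Or.inl (sub_ne_zero.2 hyt))
      have h2 : HasDerivAt (fun x : ℝ => x - t) 1 y := (hasDerivAt_id y).sub_const t
      exact (h1.comp y h2).congr_deriv (mul_one _)
    have hf := (hexp.mul hrpow).mul_const (A + B)
    apply HasDerivAt.congr_of_eventuallyEq _ hev
    convert hf using 1
    · rfl
    · rfl
    have hw' : w y = Real.exp (-y ^ 2 + t * y) * (y - t) ^ γ * (A + B) := hgt y hlt
    have hne' : y - t ≠ 0 := sub_ne_zero.2 hyt
    rw [hw', Real.rpow_sub_one hne']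
    field_simp

include hγ hw in
lemma w_zero : w t = 0 := by
  rw [hw t]
  simp [Real.zero_rpow hγ.ne']

include hγ hA hAB hw in
lemma w_tendsto_t : Filter.Tendsto w (nhds t) (nhds 0) := by
  apply squeeze_zero (w_nonneg hA hAB hw) (w_le hA hAB hw)
  have h1 : ContinuousAt (fun y : ℝ => (A + |B|) * (|y - t| ^ γ * Real.exp (-y ^ 2 + t * y))) t := by
    apply ContinuousAt.mul continuousAt_const
    apply ContinuousAt.mul _ (Continuous.continuousAt (by continuity))
    have h2 : ContinuousAt (fun x : ℝ => x ^ γ) ((fun x : ℝ => |x - t|) t) := by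
      simp only [sub_self, abs_zero]
      exact Real.continuousAt_rpow_const 0 γ (Or.inr hγ.le)
    have h5 : ContinuousAt (fun x : ℝ => |x - t|) t :=
      (continuous_abs.comp (continuous_id.sub continuous_const)).continuousAt
    have h4 := ContinuousAt.comp (g := fun x : ℝ => x ^ γ) (f := fun x : ℝ => |x - t|) (x := t) h2 h5
    simpa [Function.comp_def] using h4
  have h3 := h1.tendsto
  simpa [Real.zero_rpow hγ.ne'] using h3

lemma exp_quad_tendsto_atTop (a b : ℝ) :
    Filter.Tendsto (fun y : ℝ => Real.exp (-(3/4) * y ^ 2 + a * |y| + b)) atTop (nhds 0) := by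
  set c : ℝ := b + (a + 1) ^ 2 / 3 with hc
  have hb : ∀ᶠ y : ℝ in atTop, ‖Real.exp (-(3/4) * y ^ 2 + a * |y| + b)‖
      ≤ Real.exp c * Real.exp (-y) := by
    filter_upwards [eventually_ge_atTop (0 : ℝ)] with y hy
    rw [Real.norm_eq_abs, abs_of_nonneg (Real.exp_pos _).le, ← Real.exp_add, abs_of_nonneg hy]
    apply Real.exp_le_exp.2
    nlinarith [sq_nonneg (3 * y - 2 * (a + 1))]
  apply squeeze_zero_norm' hb
  simpa using (Real.tendsto_exp_neg_atTop_nhds_zero).const_mul (Real.exp c)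

lemma exp_quad_tendsto_atBot (a b : ℝ) :
    Filter.Tendsto (fun y : ℝ => Real.exp (-(3/4) * y ^ 2 + a * |y| + b)) atBot (nhds 0) := by
  set c : ℝ := b + (a + 1) ^ 2 / 3 with hc
  have hb : ∀ᶠ y : ℝ in atBot, ‖Real.exp (-(3/4) * y ^ 2 + a * |y| + b)‖
      ≤ Real.exp c * Real.exp y := by
    filter_upwards [eventually_le_atBot (0 : ℝ)] with y hy
    rw [Real.norm_eq_abs, abs_of_nonneg (Real.exp_pos _).le, ← Real.exp_add, abs_of_nonpos hy]
    apply Real.exp_le_exp.2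
    nlinarith [sq_nonneg (3 * y + 2 * (a + 1))]
  apply squeeze_zero_norm' hb
  simpa using (Real.tendsto_exp_atBot).const_mul (Real.exp c)

include hγ hA hAB hw in
lemma F_bound (q : Polynomial ℝ) : ∃ C : ℝ, 0 ≤ C ∧ ∀ y : ℝ,
    |q.eval y * w y| ≤ C * Real.exp (-(3/4) * y ^ 2 + (|t| + γ) * |y| + γ * |t|) := by
  obtain ⟨C, hC, hCb⟩ := poly_growth q
  refine ⟨C * (A + |B|), by positivity, fun y => ?_⟩
  have h1 : |y - t| ^ γ ≤ Real.exp ((|y| + |t|) * γ) := by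
    rw [Real.exp_mul]
    apply Real.rpow_le_rpow (abs_nonneg _) _ hγ.le
    calc |y - t| ≤ |y| + |t| := abs_sub _ _
      _ ≤ Real.exp (|y| + |t|) := by
          have := Real.add_one_le_exp (|y| + |t|); linarith
  have h2 : w y ≤ (A + |B|) * (Real.exp ((|y| + |t|) * γ) * Real.exp (-y ^ 2 + t * y)) := by
    refine (w_le hA hAB hw y).trans ?_
    have hE : (0:ℝ) ≤ Real.exp (-y ^ 2 + t * y) := (Real.exp_pos _).le
    have hAB' : (0:ℝ) ≤ A + |B| := by positivity
    apply mul_le_mul_of_nonneg_left _ hAB'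
    exact mul_le_mul_of_nonneg_right h1 hE
  rw [abs_mul, abs_of_nonneg (w_nonneg hA hAB hw y)]
  calc |q.eval y| * w y
      ≤ (C * Real.exp (y ^ 2 / 4)) * ((A + |B|) * (Real.exp ((|y| + |t|) * γ) * Real.exp (-y ^ 2 + t * y))) := by
        apply mul_le_mul (hCb y) h2 (w_nonneg hA hAB hw y) (by positivity)
    _ = C * (A + |B|) * (Real.exp (y ^ 2 / 4) * (Real.exp ((|y| + |t|) * γ) * Real.exp (-y ^ 2 + t * y))) := by
        ring
    _ = C * (A + |B|) * Real.exp (y ^ 2 / 4 + ((|y| + |t|) * γ + (-y ^ 2 + t * y))) := by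
        simp only [Real.exp_add]
    _ ≤ C * (A + |B|) * Real.exp (-(3/4) * y ^ 2 + (|t| + γ) * |y| + γ * |t|) := by
        apply mul_le_mul_of_nonneg_left _ (by positivity)
        apply Real.exp_le_exp.2
        have hty : t * y ≤ |t| * |y| := by
          calc t * y ≤ |t * y| := le_abs_self _
            _ = |t| * |y| := abs_mul _ _
        nlinarith [abs_nonneg y, abs_nonneg t]

include hγ hA hAB hw in
lemma F_tendsto_atTop (q : Polynomial ℝ) :
    Filter.Tendsto (fun y => q.eval y * w y) atTop (nhds 0) := by
  obtain ⟨C, hC, hCb⟩ := F_bound hγ hA hAB hw q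
  apply squeeze_zero_norm
    (a := fun y => C * Real.exp (-(3/4) * y ^ 2 + (|t| + γ) * |y| + γ * |t|))
    (fun y => by rw [Real.norm_eq_abs]; exact hCb y)
  simpa using (exp_quad_tendsto_atTop (|t| + γ) (γ * |t|)).const_mul C

include hγ hA hAB hw in
lemma F_tendsto_atBot (q : Polynomial ℝ) :
    Filter.Tendsto (fun y => q.eval y * w y) atBot (nhds 0) := by
  obtain ⟨C, hC, hCb⟩ := F_bound hγ hA hAB hw q
  apply squeeze_zero_norm
    (a := fun y => C * Real.exp (-(3/4) * y ^ 2 + (|t| + γ) * |y| + γ * |t|))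
    (fun y => by rw [Real.norm_eq_abs]; exact hCb y)
  simpa using (exp_quad_tendsto_atBot (|t| + γ) (γ * |t|)).const_mul C

include hγ hA hAB hw in
lemma IBP (q : Polynomial ℝ) :
    (∫ y : ℝ, (derivative q).eval y * w y)
      + ((∫ y : ℝ, ((Polynomial.C t - 2 * Polynomial.X) * q).eval y * w y)
      + γ * ∫ y : ℝ, q.eval y * w y / (y - t)) = 0 := by
  set F : ℝ → ℝ := fun y => q.eval y * w y with hF
  set G : ℝ → ℝ := fun y => (derivative q).eval y * w y +
      (((Polynomial.C t - 2 * Polynomial.X) * q).eval y * w y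
        + γ * (q.eval y * w y / (y - t))) with hG
  have hInt1 : Integrable fun y => (derivative q).eval y * w y := int_qw hγ hA hAB hw _
  have hInt2 : Integrable fun y =>
      ((Polynomial.C t - 2 * Polynomial.X) * q).eval y * w y := int_qw hγ hA hAB hw _
  have hInt3 : Integrable fun y => q.eval y * w y / (y - t) := int_qw_div hγ hA hAB hw q
  have hInt23 : Integrable fun y =>
      ((Polynomial.C t - 2 * Polynomial.X) * q).eval y * w y
        + γ * (q.eval y * w y / (y - t)) := hInt2.add (hInt3.const_mul γ)
  have hIntG : Integrable G := hInt1.add hInt23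
  have hderiv : ∀ x : ℝ, x ≠ t → HasDerivAt F (G x) x := by
    intro x hx
    have hd := (q.hasDerivAt x).mul (w_hasDerivAt hγ hw hx)
    convert hd using 1
    · rfl
    · rfl
    · rfl
    have hne : x - t ≠ 0 := sub_ne_zero.2 hx
    simp only [hG, eval_mul, eval_sub, eval_C, eval_X, eval_ofNat]
    field_simp
    ring
  have hcont : ContinuousAt F t := by
    have h1 : Filter.Tendsto F (nhds t) (nhds (q.eval t * 0)) :=
      (q.continuous.tendsto t).mul (w_tendsto_t hγ hA hAB hw)
    have h2 : F t = q.eval t * 0 := by rw [hF]; simp [w_zero hγ hw]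
    rw [ContinuousAt, h2]
    exact h1
  have hIoi : ∫ y in Ioi t, G y = 0 - F t :=
    integral_Ioi_of_hasDerivAt_of_tendsto hcont.continuousWithinAt
      (fun x hx => hderiv x (ne_of_gt hx)) hIntG.integrableOn
      (F_tendsto_atTop hγ hA hAB hw q)
  have hIic : ∫ y in Iic t, G y = F t - 0 :=
    integral_Iic_of_hasDerivAt_of_tendsto hcont.continuousWithinAt
      (fun x hx => hderiv x (ne_of_lt hx)) hIntG.integrableOn
      (F_tendsto_atBot hγ hA hAB hw q)
  have htot : ∫ y : ℝ, G y = 0 := by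
    rw [← intervalIntegral.integral_Iic_add_Ioi hIntG.integrableOn hIntG.integrableOn,
      hIoi, hIic]
    ring
  rw [hG] at htot
  rw [integral_add hInt1 hInt23, integral_add hInt2 (hInt3.const_mul γ),
    integral_const_mul] at htot
  linarith [htot]

end W

/-! ### Orthogonality machinery -/

section ORTH

variable {t : ℝ} {w : ℝ → ℝ} {P : ℕ → Polynomial ℝ} {h : ℕ → ℝ}
variable (hint : ∀ q : Polynomial ℝ, Integrable fun y => q.eval y * w y)
variable (hintd : ∀ q : Polynomial ℝ, Integrable fun y => q.eval y * w y / (y - t))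
variable (hmonic : ∀ n, (P n).Monic) (hdeg : ∀ n, (P n).natDegree = n)
variable (horth : ∀ m n, m ≠ n → ∫ y : ℝ, (P m).eval y * (P n).eval y * w y = 0)
variable (hh : ∀ n, h n = ∫ y : ℝ, ((P n).eval y) ^ 2 * w y)

set_option linter.unusedSectionVars false

include hint in
lemma II_split (q₁ q₂ : Polynomial ℝ) :
    ∫ y : ℝ, (q₁ + q₂).eval y * w y
      = (∫ y : ℝ, q₁.eval y * w y) + ∫ y : ℝ, q₂.eval y * w y := by
  simp only [eval_add, add_mul]
  exact integral_add (hint q₁) (hint q₂)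

lemma II_Cmul (c : ℝ) (q : Polynomial ℝ) :
    ∫ y : ℝ, (Polynomial.C c * q).eval y * w y = c * ∫ y : ℝ, q.eval y * w y := by
  simp only [eval_mul, eval_C, mul_assoc]
  exact integral_const_mul c _

include horth in
lemma II_orth {m n : ℕ} (hmn : m ≠ n) : ∫ y : ℝ, (P m * P n).eval y * w y = 0 := by
  simp only [eval_mul]
  exact horth m n hmn

include hh in
lemma II_sq (n : ℕ) : ∫ y : ℝ, (P n * P n).eval y * w y = h n := by
  rw [hh n]
  congr 1
  funext y
  simp [eval_mul, sq]

include hmonic hdeg in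
lemma P_zero_eq_one : P 0 = 1 := (hmonic 0).natDegree_eq_zero.1 (hdeg 0)

include hint hmonic hdeg horth in
lemma orth_poly (n : ℕ) (q : Polynomial ℝ) (hq : q.degree < (n : ℕ)) :
    ∫ y : ℝ, (P n * q).eval y * w y = 0 := by
  have main : ∀ N : ℕ, ∀ q : Polynomial ℝ, q.natDegree ≤ N → q.degree < (n : ℕ) →
      ∫ y : ℝ, (P n * q).eval y * w y = 0 := by
    intro N
    induction N with
    | zero =>
        intro q hqN hqn
        have hq' : q = Polynomial.C (q.coeff 0) := Polynomial.eq_C_of_natDegree_le_zero hqN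
        rcases Nat.eq_zero_or_pos n with hn0 | hn0
        · subst hn0
          have : q = 0 := by
            rw [← Polynomial.degree_eq_bot, ← Nat.WithBot.lt_zero_iff]
            exact_mod_cast hqn
          simp [this]
        · have hP0 : P 0 = 1 := P_zero_eq_one hmonic hdeg
          have h0 : ∫ y : ℝ, (P n).eval y * w y = 0 := by
            have := horth 0 n (by omega)
            simpa [hP0] using this
          rw [hq']
          have heq : (fun y : ℝ => (P n * Polynomial.C (q.coeff 0)).eval y * w y)
              = fun y : ℝ => q.coeff 0 * ((P n).eval y * w y) := by
            funext y; simp [eval_mul]; ring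
          rw [heq, integral_const_mul]
          simp only [mul_eq_zero]
          right
          simpa using h0
    | succ N ih =>
        intro q hqN hqn
        by_cases hq0 : q = 0
        · simp [hq0]
        set m := q.natDegree with hm
        set c := q.leadingCoeff with hc
        have hc0 : c ≠ 0 := Polynomial.leadingCoeff_ne_zero.2 hq0
        set rem := q - Polynomial.C c * P m with hrem
        have hdegq : q.degree = (m : ℕ) := Polynomial.degree_eq_natDegree hq0
        have hdegCP : (Polynomial.C c * P m).degree = (m : ℕ) := by
          rw [Polynomial.degree_mul, Polynomial.degree_C hc0,
            Polynomial.degree_eq_natDegree (hmonic m).ne_zero, hdeg m]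
          simp
        have hldCP : (Polynomial.C c * P m).leadingCoeff = c := by
          rw [Polynomial.leadingCoeff_mul, Polynomial.leadingCoeff_C, (hmonic m).leadingCoeff,
            mul_one]
        have hsub : rem.degree < q.degree := by
          apply Polynomial.degree_sub_lt (by rw [hdegq, hdegCP]) hq0
          rw [hldCP]
        have hmn : m < n := by
          have := hqn
          rw [hdegq] at this
          exact_mod_cast this
        have hsplit : q = Polynomial.C c * P m + rem := by rw [hrem]; ring
        have key : ∫ y : ℝ, (P n * q).eval y * w y
            = (∫ y : ℝ, (P n * (Polynomial.C c * P m)).eval y * w y)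
              + ∫ y : ℝ, (P n * rem).eval y * w y := by
          rw [show P n * q = P n * (Polynomial.C c * P m) + P n * rem by rw [hsplit]; ring]
          exact II_split hint _ _
        have h1 : ∫ y : ℝ, (P n * (Polynomial.C c * P m)).eval y * w y = 0 := by
          rw [show P n * (Polynomial.C c * P m) = Polynomial.C c * (P n * P m) by ring]
          rw [II_Cmul, II_orth horth (Nat.ne_of_gt hmn)]
          ring
        have h2 : ∫ y : ℝ, (P n * rem).eval y * w y = 0 := by
          apply ih rem _ (lt_trans hsub hqn)
          by_cases hrem0 : rem = 0
          · simp [hrem0]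
          · have := Polynomial.natDegree_lt_natDegree hrem0 hsub
            omega
        rw [key, h1, h2]
        ring
  exact main q.natDegree q le_rfl hq

include hmonic hdeg in
lemma P_coeff_self (n : ℕ) : (P n).coeff n = 1 := by
  have := (hmonic n).leadingCoeff
  rwa [Polynomial.leadingCoeff, hdeg n] at this

include hint hmonic hdeg horth hh in
lemma expand1 (n : ℕ) (q : Polynomial ℝ) (hq : q.degree ≤ (n : ℕ)) :
    ∫ y : ℝ, (P n * q).eval y * w y = q.coeff n * h n := by
  set c := q.coeff n with hc
  set rem := q - Polynomial.C c * P n with hrem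
  have hdegP : (P n).degree ≤ (n : ℕ) := Polynomial.degree_le_natDegree.trans (by rw [hdeg n])
  have hrdeg : rem.degree < (n : ℕ) := by
    rw [Polynomial.degree_lt_iff_coeff_zero]
    intro k hk
    rw [hrem, Polynomial.coeff_sub, Polynomial.coeff_C_mul]
    rcases eq_or_lt_of_le hk with hkn | hkn
    · have hkn' : k = n := by exact_mod_cast hkn.symm
      subst hkn'
      rw [P_coeff_self hmonic hdeg, mul_one, hc, sub_self]
    · have hkn2 : ((n : ℕ) : WithBot ℕ) < (k : ℕ) := by exact_mod_cast hkn
      have h1 : q.coeff k = 0 := Polynomial.coeff_eq_zero_of_degree_lt (lt_of_le_of_lt hq hkn2)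
      have h2 : (P n).coeff k = 0 :=
        Polynomial.coeff_eq_zero_of_degree_lt (lt_of_le_of_lt hdegP hkn2)
      rw [h1, h2, mul_zero, sub_zero]
  have hsplit : P n * q = Polynomial.C c * (P n * P n) + P n * rem := by rw [hrem]; ring
  rw [hsplit, II_split hint, II_Cmul, II_sq hh, orth_poly hint hmonic hdeg horth n rem hrdeg]
  ring

include hint hmonic hdeg horth hh in
lemma expand2 (n : ℕ) (q : Polynomial ℝ) (hq : q.degree ≤ ((n + 1 : ℕ) : ℕ)) :
    ∫ y : ℝ, (P n * q).eval y * w y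
      = (q.coeff n - q.coeff (n + 1) * (P (n + 1)).coeff n) * h n := by
  set c := q.coeff (n + 1) with hc
  set rem := q - Polynomial.C c * P (n + 1) with hrem
  have hdegP : (P (n + 1)).degree ≤ ((n + 1 : ℕ) : ℕ) :=
    Polynomial.degree_le_natDegree.trans (by rw [hdeg (n + 1)])
  have hrdeg : rem.degree ≤ (n : ℕ) := by
    rw [Polynomial.degree_le_iff_coeff_zero]
    intro k hk
    have hk' : (n + 1 : ℕ) ≤ k := by exact_mod_cast Nat.add_one_le_iff.2 (by exact_mod_cast hk)
    rw [hrem, Polynomial.coeff_sub, Polynomial.coeff_C_mul]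
    rcases eq_or_lt_of_le hk' with hkn | hkn
    · have hkn' : k = n + 1 := hkn.symm
      subst hkn'
      rw [P_coeff_self hmonic hdeg, mul_one, hc, sub_self]
    · have hkn'' : ((n + 1 : ℕ) : WithBot ℕ) < (k : ℕ) := by exact_mod_cast hkn
      have h1 : q.coeff k = 0 := Polynomial.coeff_eq_zero_of_degree_lt (lt_of_le_of_lt hq hkn'')
      have h2 : (P (n + 1)).coeff k = 0 :=
        Polynomial.coeff_eq_zero_of_degree_lt (lt_of_le_of_lt hdegP hkn'')
      rw [h1, h2, mul_zero, sub_zero]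
  have hsplit : P n * q = Polynomial.C c * (P n * P (n + 1)) + P n * rem := by rw [hrem]; ring
  rw [hsplit, II_split hint, II_Cmul, II_orth horth (by omega : n ≠ n + 1),
    expand1 hint hmonic hdeg horth hh n rem (hrdeg.trans (by exact_mod_cast le_rfl))]
  have hremc : rem.coeff n = q.coeff n - c * (P (n + 1)).coeff n := by
    rw [hrem, Polynomial.coeff_sub, Polynomial.coeff_C_mul]
  rw [hremc]
  ring

include hint hintd in
lemma LL_Xmul (q : Polynomial ℝ) :
    ∫ y : ℝ, (Polynomial.X * q).eval y * w y / (y - t)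
      = (∫ y : ℝ, q.eval y * w y) + t * ∫ y : ℝ, q.eval y * w y / (y - t) := by
  have h0 : ∀ᵐ y : ℝ, y ≠ t := by
    rw [MeasureTheory.ae_iff]
    simpa [not_not] using measure_singleton t
  have hae : (fun y : ℝ => (Polynomial.X * q).eval y * w y / (y - t))
      =ᵐ[volume] fun y => q.eval y * w y + t * (q.eval y * w y / (y - t)) := by
    filter_upwards [h0] with y hy
    have hne : y - t ≠ 0 := sub_ne_zero.2 hy
    simp only [eval_mul, eval_X]
    field_simp
    ring
  rw [integral_congr_ae hae, integral_add (hint q) ((hintd q).const_mul t),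
    integral_const_mul]

end ORTH

/-- For every n >= 1, sum_{j=0}^{n-1} R_j(t) = 2 beta_n (R_{n-1}(t) + R_n(t)) - t r_n(t). -/
theorem summed_identity
    (t γ A B : ℝ) (hγ : 0 < γ) (hA : 0 ≤ A) (hAB : 0 ≤ A + B)
    (hABpos : 0 < A ∨ 0 < A + B)
    (w : ℝ → ℝ)
    (hw : ∀ y : ℝ, w y =
      Real.exp (-y ^ 2 + t * y) * |y - t| ^ γ *
        (A + B * (if 0 < y - t then (1 : ℝ) else 0)))
    (P : ℕ → Polynomial ℝ)
    (hmonic : ∀ n, (P n).Monic)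
    (hdeg : ∀ n, (P n).natDegree = n)
    (horth : ∀ m n, m ≠ n →
      ∫ y : ℝ, (P m).eval y * (P n).eval y * w y = 0)
    (h : ℕ → ℝ)
    (hh : ∀ n, h n = ∫ y : ℝ, ((P n).eval y) ^ 2 * w y)
    (hhpos : ∀ n, 0 < h n)
    (β : ℕ → ℝ)
    (hβ : ∀ n, 1 ≤ n → β n = h n / h (n - 1))
    (R : ℕ → ℝ)
    (hR : ∀ n, R n = γ / h n * ∫ y : ℝ, ((P n).eval y) ^ 2 * w y / (y - t))
    (r : ℕ → ℝ)
    (hr : ∀ n, 1 ≤ n → r n = γ / h (n - 1) *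
      ∫ y : ℝ, (P n).eval y * (P (n - 1)).eval y * w y / (y - t)) :
    ∀ n : ℕ, 1 ≤ n →
      ∑ j ∈ Finset.range n, R j = 2 * β n * (R (n - 1) + R n) - t * r n := by

  intro n hn
  obtain ⟨m, rfl⟩ : ∃ m, n = m + 1 := ⟨n - 1, by omega⟩
  have hint : ∀ q : Polynomial ℝ, Integrable fun y => q.eval y * w y := int_qw hγ hA hAB hw
  have hintd : ∀ q : Polynomial ℝ, Integrable fun y => q.eval y * w y / (y - t) :=
    int_qw_div hγ hA hAB hw
  have hPne : ∀ k, P k ≠ 0 := fun k => (hmonic k).ne_zero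
  have hPdeg : ∀ k : ℕ, (P k).degree = (k : ℕ) := fun k => by
    rw [Polynomial.degree_eq_natDegree (hPne k), hdeg k]
  have hPcs : ∀ k : ℕ, (P k).coeff k = 1 := P_coeff_self hmonic hdeg
  have hPc0 : ∀ k j : ℕ, k < j → (P k).coeff j = 0 := fun k j hj =>
    Polynomial.coeff_eq_zero_of_natDegree_lt (by rw [hdeg]; exact hj)
  have hhne : ∀ k, h k ≠ 0 := fun k => (hhpos k).ne'
  set pc : ℕ → ℝ := fun k => if k = 0 then 0 else (P k).coeff (k - 1) with hpc
  have hpcs : ∀ k : ℕ, pc (k + 1) = (P (k + 1)).coeff k := by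
    intro k; simp [hpc]
  have hXPc : ∀ k : ℕ, (Polynomial.X * P k).coeff k = pc k := by
    intro k; rw [coeff_X_mul', hpc]
  -- conversion of R and r to polynomial-integral form
  have hRL : ∀ k : ℕ, γ * (∫ y : ℝ, (P k * P k).eval y * w y / (y - t)) = R k * h k := by
    intro k
    have hcong : (fun y : ℝ => (P k * P k).eval y * w y / (y - t))
        = fun y : ℝ => ((P k).eval y) ^ 2 * w y / (y - t) := by
      funext y; rw [eval_mul, sq]
    rw [hcong, hR k]
    field_simp
    rw [mul_div_assoc, div_self (hhne k), mul_one]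
  have hrL : γ * (∫ y : ℝ, (P (m+1) * P m).eval y * w y / (y - t)) = r (m+1) * h m := by
    have hr' := hr (m+1) (by omega)
    simp only [Nat.add_sub_cancel] at hr'
    have hcong : (fun y : ℝ => (P (m+1) * P m).eval y * w y / (y - t))
        = fun y : ℝ => (P (m+1)).eval y * (P m).eval y * w y / (y - t) := by
      funext y; rw [eval_mul]
    rw [hcong, hr']
    field_simp
    rw [mul_div_assoc, div_self (hhne m), mul_one]
  -- degree bounds
  have hdD : ∀ k : ℕ, (derivative (P k)).degree < ((k : ℕ) : WithBot ℕ) := fun k => by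
    have := Polynomial.degree_derivative_lt (hPne k); rwa [hPdeg k] at this
  have hdDle : ∀ k : ℕ, (derivative (P (k+1))).degree ≤ ((k : ℕ) : WithBot ℕ) := by
    intro k
    apply degree_le_of_coeffs
    intro j hj
    rw [Polynomial.coeff_derivative, hPc0 (k+1) (j+1) (by omega), zero_mul]
  have hdX : ∀ k : ℕ, (Polynomial.X * derivative (P (k+1))).degree ≤ (((k+1 : ℕ)) : WithBot ℕ) := by
    intro k
    apply degree_le_of_coeffs
    intro j hj
    rw [coeff_X_mul', if_neg (by omega : ¬ j = 0), Polynomial.coeff_derivative,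
      hPc0 (k+1) ((j-1)+1) (by omega), zero_mul]
  have hXdPm : (Polynomial.X * derivative (P m)).degree < (((m+1 : ℕ)) : WithBot ℕ) := by
    apply lt_of_le_of_lt (degree_le_of_coeffs _ m ?_)
    · exact_mod_cast WithBot.coe_lt_coe.2 (Nat.lt_succ_self m)
    · intro j hj
      rw [coeff_X_mul', if_neg (by omega : ¬ j = 0), Polynomial.coeff_derivative,
        hPc0 m ((j-1)+1) (by omega), zero_mul]
  have hlinP : ∀ k : ℕ, ((Polynomial.C t - 2 * Polynomial.X) * P k).degree
      ≤ (((k+1 : ℕ)) : WithBot ℕ) := by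
    intro k
    apply degree_le_of_coeffs
    intro j hj
    rw [coeff_lin, coeff_X_mul', hPc0 k j (by omega), if_neg (by omega : ¬ j = 0),
      hPc0 k (j-1) (by omega)]
    ring
  have hlinXP : ((Polynomial.C t - 2 * Polynomial.X) * (Polynomial.X * P m)).degree
      ≤ (((m+2 : ℕ)) : WithBot ℕ) := by
    apply degree_le_of_coeffs
    intro j hj
    have e1 : (Polynomial.X * P m).coeff j = 0 := by
      rw [coeff_X_mul', if_neg (by omega : ¬ j = 0), hPc0 m (j-1) (by omega)]
    have e2 : (Polynomial.X * (Polynomial.X * P m)).coeff j = 0 := by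
      rw [coeff_X_mul', if_neg (by omega : ¬ j = 0), coeff_X_mul',
        if_neg (by omega : ¬ j - 1 = 0), hPc0 m (j-1-1) (by omega)]
    rw [coeff_lin, e1, e2]
    ring
  -- F1 : R k = 2 (pc k - pc (k+1)) - t
  have hF1 : ∀ k : ℕ, R k = 2 * (pc k - pc (k + 1)) - t := by
    intro k
    have hibp := IBP hγ hA hAB hw (P k * P k)
    have hA1 : ∫ y : ℝ, (derivative (P k * P k)).eval y * w y = 0 := by
      rw [show derivative (P k * P k) = P k * (Polynomial.C 2 * derivative (P k)) by
        rw [Polynomial.derivative_mul,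
          show Polynomial.C (2:ℝ) = (2:Polynomial ℝ) from map_ofNat Polynomial.C 2]
        ring]
      apply orth_poly hint hmonic hdeg horth
      refine lt_of_le_of_lt ?_ (hdD k)
      refine le_trans (Polynomial.degree_mul_le _ _) ?_
      rw [Polynomial.degree_C (by norm_num : (2:ℝ) ≠ 0)]
      simp
    have hB1 : ∫ y : ℝ, ((Polynomial.C t - 2 * Polynomial.X) * (P k * P k)).eval y * w y
        = (t - 2 * pc k + 2 * pc (k+1)) * h k := by
      rw [show (Polynomial.C t - 2 * Polynomial.X) * (P k * P k)
          = P k * ((Polynomial.C t - 2 * Polynomial.X) * P k) by ring]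
      rw [expand2 hint hmonic hdeg horth hh k _ (hlinP k)]
      have c1 : ((Polynomial.C t - 2 * Polynomial.X) * P k).coeff (k+1) = -2 := by
        rw [coeff_lin, hPc0 k (k+1) (by omega), coeff_X_mul', if_neg (by omega : ¬ k+1 = 0),
          Nat.add_sub_cancel, hPcs k]
        ring
      have c2 : ((Polynomial.C t - 2 * Polynomial.X) * P k).coeff k = t - 2 * pc k := by
        rw [coeff_lin, hPcs k, hXPc k]
        ring
      rw [c1, c2, hpcs k]
      ring
    rw [hA1, hB1, hRL k] at hibp
    have hkey : R k * h k = (2 * (pc k - pc (k+1)) - t) * h k := by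
      have : (t - 2 * pc k + 2 * pc (k+1)) * h k + R k * h k = 0 := by linarith
      nlinarith [this]
    exact mul_right_cancel₀ (hhne k) hkey
  -- F2
  have hibp2 := IBP hγ hA hAB hw (P (m+1) * P m)
  have hA2 : ∫ y : ℝ, (derivative (P (m+1) * P m)).eval y * w y = ((m:ℝ)+1) * h m := by
    rw [show derivative (P (m+1) * P m)
        = P m * derivative (P (m+1)) + P (m+1) * derivative (P m) by
      rw [Polynomial.derivative_mul]; ring]
    rw [II_split hint, expand1 hint hmonic hdeg horth hh m _ (hdDle m),
      orth_poly hint hmonic hdeg horth (m+1) _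
        (lt_of_lt_of_le (hdD m) (by exact_mod_cast Nat.le_succ m))]
    rw [Polynomial.coeff_derivative, hPcs (m+1)]
    push_cast
    ring
  have hB2 : ∫ y : ℝ, ((Polynomial.C t - 2 * Polynomial.X) * (P (m+1) * P m)).eval y * w y
      = -2 * h (m+1) := by
    rw [show (Polynomial.C t - 2 * Polynomial.X) * (P (m+1) * P m)
        = P (m+1) * ((Polynomial.C t - 2 * Polynomial.X) * P m) by ring]
    rw [expand1 hint hmonic hdeg horth hh (m+1) _ (hlinP m)]
    have c1 : ((Polynomial.C t - 2 * Polynomial.X) * P m).coeff (m+1) = -2 := by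
      rw [coeff_lin, hPc0 m (m+1) (by omega), coeff_X_mul', if_neg (by omega : ¬ m+1 = 0),
        Nat.add_sub_cancel, hPcs m]
      ring
    rw [c1]
  rw [hA2, hB2, hrL] at hibp2
  -- F3
  have hibp3 := IBP hγ hA hAB hw (Polynomial.X * (P (m+1) * P m))
  have hA3 : ∫ y : ℝ, (derivative (Polynomial.X * (P (m+1) * P m))).eval y * w y
      = -pc (m+1) * h m := by
    rw [show derivative (Polynomial.X * (P (m+1) * P m))
        = P (m+1) * P m + (P m * (Polynomial.X * derivative (P (m+1)))
          + P (m+1) * (Polynomial.X * derivative (P m))) by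
      rw [Polynomial.derivative_mul, Polynomial.derivative_mul, Polynomial.derivative_X]; ring]
    rw [II_split hint, II_split hint, II_orth horth (by omega : m+1 ≠ m),
      expand2 hint hmonic hdeg horth hh m _ (hdX m),
      orth_poly hint hmonic hdeg horth (m+1) (Polynomial.X * derivative (P m)) hXdPm]
    have c1 : (Polynomial.X * derivative (P (m+1))).coeff (m+1) = (m:ℝ)+1 := by
      rw [coeff_X_mul', if_neg (by omega : ¬ m+1 = 0), Nat.add_sub_cancel,
        Polynomial.coeff_derivative, hPcs (m+1)]
      push_cast
      ring
    have c2 : (Polynomial.X * derivative (P (m+1))).coeff m = (m:ℝ) * pc (m+1) := by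
      cases m with
      | zero => simp [coeff_X_mul']
      | succ i =>
          rw [coeff_X_mul', if_neg (by omega : ¬ i+1 = 0), Nat.add_sub_cancel,
            Polynomial.coeff_derivative, hpcs (i+1)]
          push_cast
          ring
    rw [c1, c2, hpcs m]
    ring
  have hB3 : ∫ y : ℝ, ((Polynomial.C t - 2 * Polynomial.X)
      * (Polynomial.X * (P (m+1) * P m))).eval y * w y
      = (t - 2 * pc m + 2 * pc (m+2)) * h (m+1) := by
    rw [show (Polynomial.C t - 2 * Polynomial.X) * (Polynomial.X * (P (m+1) * P m))
        = P (m+1) * ((Polynomial.C t - 2 * Polynomial.X) * (Polynomial.X * P m)) by ring]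
    rw [expand2 hint hmonic hdeg horth hh (m+1) _ hlinXP]
    have e1 : (Polynomial.X * P m).coeff (m+2) = 0 := by
      rw [coeff_X_mul', if_neg (by omega : ¬ m+2 = 0)]
      exact hPc0 m (m+2-1) (by omega)
    have e3 : (Polynomial.X * P m).coeff (m+1) = 1 := by
      rw [coeff_X_mul', if_neg (by omega : ¬ m+1 = 0), Nat.add_sub_cancel, hPcs m]
    have e2 : (Polynomial.X * (Polynomial.X * P m)).coeff (m+2) = 1 := by
      rw [coeff_X_mul', if_neg (by omega : ¬ m+2 = 0)]
      exact e3
    have e4 : (Polynomial.X * (Polynomial.X * P m)).coeff (m+1) = pc m := by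
      rw [coeff_X_mul', if_neg (by omega : ¬ m+1 = 0), Nat.add_sub_cancel, hXPc m]
    have c1 : ((Polynomial.C t - 2 * Polynomial.X) * (Polynomial.X * P m)).coeff (m+2) = -2 := by
      rw [coeff_lin, e1, e2]
      ring
    have c2 : ((Polynomial.C t - 2 * Polynomial.X) * (Polynomial.X * P m)).coeff (m+1)
        = t - 2 * pc m := by
      rw [coeff_lin, e3, e4]
      ring
    rw [show m+1+1 = m+2 from rfl, c1, c2, hpcs (m+1)]
    ring
  have hC3 : γ * ∫ y : ℝ, (Polynomial.X * (P (m+1) * P m)).eval y * w y / (y - t)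
      = t * (r (m+1) * h m) := by
    rw [LL_Xmul hint hintd, II_orth horth (by omega : m+1 ≠ m), ← hrL]
    ring
  rw [hA3, hB3, hC3] at hibp3
  -- summation
  have hsum : ∑ j ∈ Finset.range (m+1), R j = -2 * pc (m+1) - ((m:ℝ)+1) * t := by
    have hcg : ∀ j ∈ Finset.range (m+1), R j = (2 * pc j - 2 * pc (j+1)) - t := fun j _ => by
      rw [hF1 j]; ring
    rw [Finset.sum_congr rfl hcg, Finset.sum_sub_distrib,
      Finset.sum_range_sub' (f := fun j => 2 * pc j)]
    simp only [Finset.sum_const, Finset.card_range, nsmul_eq_mul]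
    have : pc 0 = 0 := by simp [hpc]
    rw [this]
    push_cast
    ring
  -- conclusion
  have hb : β (m+1) = h (m+1) / h m := by
    rw [hβ (m+1) (by omega)]
    rfl
  rw [hsum, hb, show m+1-1 = m from rfl, hF1 m, hF1 (m+1)]
  field_simp [hhne m]
  linear_combination 2 * hibp3 - t * hibp2
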